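/- Let V_1, …, V_r be pairwise disjoint subsets of ℂ^m, each of which is the common zero set of an ideal of ℝ[X_1, …, X_m] (in particular each V_ℓ is conjugate symmetric: z ∈ V_ℓ if and only if its componentwise complex conjugate z̄ ∈ V_ℓ). Then there exist polynomials p_1, …, p_r ∈ ℝ[X_1, …, X_m] such that p_i(u) = δ_{ij} (the Kronecker delta) for all i, j ∈ {1, …, r} and all u ∈ V_j. -/

import Mathlib

open MvPolynomial

/-- Every polynomial over `ℂ` decomposes as `a + i·b` with `a, b` real polynomials. -/
lemma complex_poly_decomp {σ : Type*} (c : MvPolynomial σ ℂ) :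
    ∃ a b : MvPolynomial σ ℝ,
      c = map (algebraMap ℝ ℂ) a + C Complex.I * map (algebraMap ℝ ℂ) b := by
  induction c using MvPolynomial.induction_on with
  | C z =>
      refine ⟨C z.re, C z.im, ?_⟩
      rw [map_C, map_C, ← C_mul, ← C_add]
      congr 1
      simp only [Complex.coe_algebraMap]
      rw [mul_comm Complex.I]
      exact (Complex.re_add_im z).symm
  | add p q hp hq =>
      obtain ⟨a, b, rfl⟩ := hp
      obtain ⟨a', b', rfl⟩ := hq
      exact ⟨a + a', b + b', by push_cast [map_add]; ring⟩
  | mul_X p n hp =>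
      obtain ⟨a, b, rfl⟩ := hp
      exact ⟨a * X n, b * X n, by push_cast [map_mul, map_X]; ring⟩

/-- Membership in the complexification of a real ideal gives a real/imaginary
decomposition with both parts in the ideal. -/
lemma mem_map_decomp {σ : Type*} (I : Ideal (MvPolynomial σ ℝ))
    {x : MvPolynomial σ ℂ}
    (hx : x ∈ Ideal.map (MvPolynomial.map (algebraMap ℝ ℂ)) I) :
    ∃ A B : MvPolynomial σ ℝ, A ∈ I ∧ B ∈ I ∧
      x = map (algebraMap ℝ ℂ) A + C Complex.I * map (algebraMap ℝ ℂ) B := by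
  refine Submodule.span_induction ?_ ?_ ?_ ?_ hx
  · rintro y ⟨q, hq, rfl⟩
    exact ⟨q, 0, hq, I.zero_mem, by simp⟩
  · exact ⟨0, 0, I.zero_mem, I.zero_mem, by simp⟩
  · rintro y z - - ⟨A, B, hA, hB, rfl⟩ ⟨A', B', hA', hB', rfl⟩
    exact ⟨A + A', B + B', I.add_mem hA hA', I.add_mem hB hB', by push_cast [map_add]; ring⟩
  · rintro c y - ⟨A, B, hA, hB, rfl⟩
    obtain ⟨a, b, rfl⟩ := complex_poly_decomp c
    refine ⟨a * A - b * B, a * B + b * A,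
      I.sub_mem (I.mul_mem_left a hA) (I.mul_mem_left b hB),
      I.add_mem (I.mul_mem_left a hB) (I.mul_mem_left b hA), ?_⟩
    have hI : (C Complex.I : MvPolynomial σ ℂ) * C Complex.I = -1 := by
      rw [← C_mul, Complex.I_mul_I]; simp
    simp only [smul_eq_mul, map_add, map_sub, map_mul]
    linear_combination (map (algebraMap ℝ ℂ) b * map (algebraMap ℝ ℂ) B) * hI

/-- If `1` lies in the complexification of a real ideal, then `1 ∈ I`. -/
lemma one_mem_of_one_mem_map {σ : Type*} (I : Ideal (MvPolynomial σ ℝ))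
    (h : (1 : MvPolynomial σ ℂ) ∈ Ideal.map (MvPolynomial.map (algebraMap ℝ ℂ)) I) :
    (1 : MvPolynomial σ ℝ) ∈ I := by
  obtain ⟨A, B, hA, hB, hEq⟩ := mem_map_decomp I h
  classical
  have : A = 1 := by
    ext n
    have h1 := congrArg (coeff n) hEq
    simp only [coeff_add, coeff_map, coeff_C_mul] at h1
    have h2 := congrArg Complex.re h1
    have h3 : (coeff n (1 : MvPolynomial σ ℂ)).re = coeff n (1 : MvPolynomial σ ℝ) := by
      rw [MvPolynomial.coeff_one, MvPolynomial.coeff_one]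
      split_ifs <;> simp
    have h4 : ((algebraMap ℝ ℂ) (coeff n A) + Complex.I * (algebraMap ℝ ℂ) (coeff n B)).re
        = coeff n A := by simp
    rw [← h3, h2, h4]
  rwa [this] at hA

/-- Let `V_1, …, V_r` be pairwise disjoint subsets of `ℂ^m`, each the
common zero set of an ideal of `ℝ[X_1, …, X_m]`.  Then there exist polynomials
`p_1, …, p_r ∈ ℝ[X_1, …, X_m]` such that `p_i(u) = δ_{ij}` for all `u ∈ V_j`. -/
theorem stmt14 (m r : ℕ) (V : Fin r → Set (Fin m → ℂ))
    (hvariety : ∀ ℓ, ∃ I : Ideal (MvPolynomial (Fin m) ℝ),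
      V ℓ = {u : Fin m → ℂ | ∀ p ∈ I, aeval u p = 0})
    (hdisj : ∀ i j, i ≠ j → Disjoint (V i) (V j)) :
    ∃ p : Fin r → MvPolynomial (Fin m) ℝ,
      ∀ i j, ∀ u ∈ V j, aeval u (p i) = if i = j then 1 else 0 := by
  choose J hJ using hvariety
  have haev : ∀ (u : Fin m → ℂ) (p : MvPolynomial (Fin m) ℝ),
      aeval u p = eval u (map (algebraMap ℝ ℂ) p) := by
    intro u p
    rw [aeval_def, ← eval_map]
  -- key: for i ≠ j, the ideals J i and J j are comaximal
  have key : ∀ i j, i ≠ j → ∃ f gg : MvPolynomial (Fin m) ℝ,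
      f ∈ J i ∧ gg ∈ J j ∧ f + gg = 1 := by
    intro i j hij
    set K := Ideal.map (MvPolynomial.map (algebraMap ℝ ℂ)) (J i ⊔ J j) with hK
    have hzl : zeroLocus ℂ K = ∅ := by
      by_contra h
      obtain ⟨u, hu⟩ := Set.nonempty_iff_ne_empty.2 h
      have hui : u ∈ V i := by
        rw [hJ i]
        intro p hp
        rw [haev]
        exact hu _ (Ideal.mem_map_of_mem _ (Ideal.mem_sup_left hp))
      have huj : u ∈ V j := by
        rw [hJ j]
        intro p hp
        rw [haev]
        exact hu _ (Ideal.mem_map_of_mem _ (Ideal.mem_sup_right hp))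
      exact (hdisj i j hij).ne_of_mem hui huj rfl
    have hrad : K.radical = ⊤ := by
      rw [← vanishingIdeal_zeroLocus_eq_radical (K := ℂ), hzl, vanishingIdeal_empty]
    have hKtop : K = ⊤ := by
      rwa [Ideal.radical_eq_top] at hrad
    have h1 : (1 : MvPolynomial (Fin m) ℂ) ∈ K := hKtop ▸ Submodule.mem_top
    have h1' : (1 : MvPolynomial (Fin m) ℝ) ∈ J i ⊔ J j :=
      one_mem_of_one_mem_map _ h1
    obtain ⟨f, hf, gg, hgg, hfg⟩ := Submodule.mem_sup.mp h1'
    exact ⟨f, gg, hf, hgg, hfg⟩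
  choose f g hf hg hfg using key
  refine ⟨fun i => ∏ j : Fin r, if h : i = j then 1 else g i j h, ?_⟩
  intro i j u hu
  rw [map_prod]
  by_cases hij : i = j
  · subst hij
    rw [if_pos rfl]
    apply Finset.prod_eq_one
    intro k _
    by_cases h : i = k
    · simp [h]
    · rw [dif_neg h, haev]
      have h1 : aeval u (f i k h) = 0 := by
        rw [hJ i] at hu
        exact hu _ (hf i k h)
      have : g i k h = 1 - f i k h := by
        have := hfg i k h; linear_combination this
      rw [this]
      rw [haev] at h1
      simp [map_sub, h1]
  · rw [if_neg hij]
    apply Finset.prod_eq_zero (Finset.mem_univ j)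
    rw [dif_neg hij]
    rw [hJ j] at hu
    exact hu _ (hg i j hij)
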